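/- Let (P_n)_{n≥0} be a sequence of real polynomials with deg P_n = n for every n, with the convention P_{-1} = 0. Suppose there are real sequences (A_n)_{n≥0}, (B_n)_{n≥0}, (C_n)_{n≥0} such that x·P_n(x) = A_n P_{n+1}(x) + B_n P_n(x) + C_n P_{n-1}(x) for all n ≥ 0, and real constants c_{n,k} (for n ≥ 1, 1 ≤ k ≤ n) such that P_n'(x) = Σ_{k=1}^{n} c_{n,k} P_{n-k}(x) for all n ≥ 1. Extend the conventions by A_{-1} = 0 and c_{m,j} = 0 whenever j ≤ 0 or j > m. Then for every n ≥ 1 and every k with 1 ≤ k ≤ n, the constant b_{n,k} := A_n c_{n+1,k+1} - A_{n-k-1} c_{n,k+1} + (B_n - B_{n-k}) c_{n,k} + C_n c_{n-1,k-1} - C_{n-k+1} c_{n,k-1} equals 0. -/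

import Mathlib

private lemma sum_shift_poly (f : ℤ → Polynomial ℝ) (a b : ℤ) :
    ∑ k ∈ Finset.Icc (a + 1) (b + 1), f k = ∑ k ∈ Finset.Icc a b, f (k + 1) := by
  rw [← Finset.map_add_right_Icc a b 1, Finset.sum_map]
  rfl


private lemma indep_aux (P : ℤ → Polynomial ℝ)
    (hPdeg : ∀ n : ℤ, 0 ≤ n → (P n).degree = (n.toNat : WithBot ℕ)) :
    ∀ (N : ℕ) (d : ℤ → ℝ),
      (∑ m ∈ Finset.Icc (0:ℤ) (N:ℤ), Polynomial.C (d m) * P m) = 0 →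
      ∀ m ∈ Finset.Icc (0:ℤ) (N:ℤ), d m = 0 := by
  intro N
  induction N with
  | zero =>
      intro d hsum m hm
      have hm0 : m = 0 := by simp only [Finset.mem_Icc] at hm; omega
      subst hm0
      rw [show ((0:ℕ):ℤ) = 0 from rfl, Finset.Icc_self, Finset.sum_singleton] at hsum
      have hP0 : P 0 ≠ 0 := by
        intro h
        have h2 := hPdeg 0 le_rfl
        rw [h] at h2
        simp at h2
      rcases mul_eq_zero.mp hsum with h | h
      · exact Polynomial.C_eq_zero.mp h
      · exact absurd h hP0
  | succ N ih =>
      intro d hsum m hm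
      have hcast : ((N+1:ℕ):ℤ) = (N:ℤ) + 1 := by push_cast; ring
      have hins : Finset.Icc (0:ℤ) ((N:ℤ)+1) = insert ((N:ℤ)+1) (Finset.Icc (0:ℤ) (N:ℤ)) := by
        ext x
        simp only [Finset.mem_Icc, Finset.mem_insert]
        omega
      rw [hcast, hins, Finset.sum_insert (by simp)] at hsum
      have hdegtop : (P ((N:ℤ)+1)).degree = ((N+1 : ℕ) : WithBot ℕ) := by
        have h := hPdeg ((N:ℤ)+1) (by positivity)
        rw [h, show ((N:ℤ)+1).toNat = N+1 by omega]
      have hPne : P ((N:ℤ)+1) ≠ 0 := by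
        intro h
        rw [h, Polynomial.degree_zero] at hdegtop
        exact WithBot.bot_ne_coe hdegtop
      have hnd : (P ((N:ℤ)+1)).natDegree = N+1 := Polynomial.natDegree_eq_of_degree_eq_some hdegtop
      have hPtop : (P ((N:ℤ)+1)).coeff (N+1) ≠ 0 := by
        rw [← hnd]
        exact mt Polynomial.leadingCoeff_eq_zero.mp hPne
      have hrest : (∑ m ∈ Finset.Icc (0:ℤ) (N:ℤ), Polynomial.C (d m) * P m).coeff (N+1)
          = 0 := by
        rw [Polynomial.finset_sum_coeff]
        apply Finset.sum_eq_zero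
        intro i hi
        apply Polynomial.coeff_eq_zero_of_degree_lt
        simp only [Finset.mem_Icc] at hi
        have h1 : (Polynomial.C (d i) * P i).degree ≤ (P i).degree := by
          calc (Polynomial.C (d i) * P i).degree
              ≤ (Polynomial.C (d i)).degree + (P i).degree := Polynomial.degree_mul_le _ _
            _ ≤ 0 + (P i).degree := add_le_add Polynomial.degree_C_le le_rfl
            _ = (P i).degree := by rw [zero_add]
        refine lt_of_le_of_lt h1 ?_
        rw [hPdeg i hi.1]
        exact_mod_cast (show i.toNat < N + 1 by omega)
      have hd0 : d ((N:ℤ)+1) = 0 := by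
        have := congrArg (fun p => Polynomial.coeff p (N+1)) hsum
        simp only [Polynomial.coeff_add, Polynomial.coeff_C_mul, hrest, Polynomial.coeff_zero,
          add_zero] at this
        rcases mul_eq_zero.mp this with h | h
        · exact h
        · exact absurd h hPtop
      have hsum' : (∑ m ∈ Finset.Icc (0:ℤ) (N:ℤ), Polynomial.C (d m) * P m) = 0 := by
        rw [hd0] at hsum
        simpa using hsum
      rw [hcast] at hm
      simp only [Finset.mem_Icc] at hm
      rcases eq_or_lt_of_le hm.2 with h | h
      · rw [h]; exact hd0
      · exact ih d hsum' m (by simp only [Finset.mem_Icc]; omega)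



/-- for a family of ordinary orthogonal polynomials `P_n` (degree
exactly `n` for `n ≥ 0`, `P_n = 0` for `n < 0`) with three-term recurrence
`x P_n = A_n P_{n+1} + B_n P_n + C_n P_{n-1}` and derivative expansion
`P_n' = Σ_{k=1}^n c_{n,k} P_{n-k}`, extending the conventions by `A_{-1} = 0` and
`c_{m,j} = 0` for `j ≤ 0` or `j > m`, the constants
`b_{n,k} = A_n c_{n+1,k+1} - A_{n-k-1} c_{n,k+1} + (B_n - B_{n-k}) c_{n,k}
          + C_n c_{n-1,k-1} - C_{n-k+1} c_{n,k-1}`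
vanish for all `1 ≤ k ≤ n`. -/
theorem orthopoly_bnk_vanish (P : ℤ → Polynomial ℝ)
    (hPneg : ∀ n : ℤ, n < 0 → P n = 0)
    (hPdeg : ∀ n : ℤ, 0 ≤ n → (P n).degree = (n.toNat : WithBot ℕ))
    (A B Cc : ℤ → ℝ) (hA : A (-1) = 0)
    (c : ℤ → ℤ → ℝ) (hc : ∀ m k : ℤ, k ≤ 0 ∨ m < k → c m k = 0)
    (hrec : ∀ n : ℤ, 0 ≤ n →
      Polynomial.X * P n =
        Polynomial.C (A n) * P (n + 1) + Polynomial.C (B n) * P n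
          + Polynomial.C (Cc n) * P (n - 1))
    (hder : ∀ n : ℤ, 1 ≤ n →
      Polynomial.derivative (P n) =
        ∑ k ∈ Finset.Icc (1 : ℤ) n, Polynomial.C (c n k) * P (n - k)) :
    ∀ n k : ℤ, 1 ≤ n → 1 ≤ k → k ≤ n →
      A n * c (n + 1) (k + 1) - A (n - k - 1) * c n (k + 1)
        + (B n - B (n - k)) * c n k
        + Cc n * c (n - 1) (k - 1) - Cc (n - k + 1) * c n (k - 1) = 0 := by
  intro n k hn hk hkn
  have h0n : (0:ℤ) ≤ n := by linarith
  have hder' : ∀ m : ℤ, 0 ≤ m → Polynomial.derivative (P m)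
      = ∑ j ∈ Finset.Icc (1:ℤ) m, Polynomial.C (c m j) * P (m - j) := by
    intro m hm
    rcases lt_or_eq_of_le hm with h | h
    · exact hder m h
    · rw [← h]
      have hd : (P 0).degree ≤ 0 := by rw [hPdeg 0 le_rfl]; simp
      rw [Polynomial.eq_C_of_degree_le_zero hd]
      simp
  have hX : P n + Polynomial.X * Polynomial.derivative (P n)
      = Polynomial.C (A n) * Polynomial.derivative (P (n+1))
        + Polynomial.C (B n) * Polynomial.derivative (P n)
        + Polynomial.C (Cc n) * Polynomial.derivative (P (n-1)) := by
    have h := congrArg Polynomial.derivative (hrec n h0n)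
    simpa [Polynomial.derivative_mul] using h
  have hXd : Polynomial.X * Polynomial.derivative (P n)
      = ∑ j ∈ Finset.Icc (1:ℤ) n,
          (Polynomial.C (c n j * A (n-j)) * P (n-j+1)
           + Polynomial.C (c n j * B (n-j)) * P (n-j)
           + Polynomial.C (c n j * Cc (n-j)) * P (n-j-1)) := by
    rw [hder' n h0n, Finset.mul_sum]
    refine Finset.sum_congr rfl (fun j hj => ?_)
    simp only [Finset.mem_Icc] at hj
    have h2 := hrec (n-j) (by omega)
    calc Polynomial.X * (Polynomial.C (c n j) * P (n-j))
        = Polynomial.C (c n j) * (Polynomial.X * P (n-j)) := by ring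
      _ = _ := by
          rw [h2, show n-j+1 = n-j+1 from rfl]
          simp only [Polynomial.C_mul]
          ring
  have hE : P n + ∑ j ∈ Finset.Icc (1:ℤ) n,
          (Polynomial.C (c n j * A (n-j)) * P (n-j+1)
           + Polynomial.C (c n j * B (n-j)) * P (n-j)
           + Polynomial.C (c n j * Cc (n-j)) * P (n-j-1))
      = Polynomial.C (A n) * (∑ j ∈ Finset.Icc (1:ℤ) (n+1), Polynomial.C (c (n+1) j) * P (n+1-j))
        + Polynomial.C (B n) * (∑ j ∈ Finset.Icc (1:ℤ) n, Polynomial.C (c n j) * P (n-j))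
        + Polynomial.C (Cc n) * (∑ j ∈ Finset.Icc (1:ℤ) (n-1), Polynomial.C (c (n-1) j) * P (n-1-j)) := by
    rw [← hXd, ← hder' (n+1) (by omega), ← hder' n h0n, ← hder' (n-1) (by omega)]
    exact hX
  set K := Finset.Icc (0:ℤ) (n+1) with hK
  have hRA : Polynomial.C (A n) * (∑ j ∈ Finset.Icc (1:ℤ) (n+1), Polynomial.C (c (n+1) j) * P (n+1-j))
      = ∑ kk ∈ K, Polynomial.C (A n * c (n+1) (kk+1)) * P (n-kk) := by
    rw [Finset.mul_sum]
    rw [show Finset.Icc (1:ℤ) (n+1) = Finset.Icc (0+1) (n+1) by norm_num]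
    rw [sum_shift_poly (fun j => Polynomial.C (A n) * (Polynomial.C (c (n+1) j) * P (n+1-j))) 0 n]
    rw [Finset.sum_congr rfl (fun kk _ => show
        Polynomial.C (A n) * (Polynomial.C (c (n+1) (kk+1)) * P (n+1-(kk+1)))
          = Polynomial.C (A n * c (n+1) (kk+1)) * P (n-kk) by
      rw [show n+1-(kk+1) = n - kk by ring, Polynomial.C_mul]; ring)]
    apply Finset.sum_subset
    · intro x hx; simp only [hK, Finset.mem_Icc] at *; omega
    · intro x hx hnx
      simp only [hK, Finset.mem_Icc] at hx hnx
      rw [show x = n+1 by omega, hc (n+1) (n+1+1) (Or.inr (by omega)), mul_zero, map_zero, zero_mul]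
  have hRB : Polynomial.C (B n) * (∑ j ∈ Finset.Icc (1:ℤ) n, Polynomial.C (c n j) * P (n-j))
      = ∑ kk ∈ K, Polynomial.C (B n * c n kk) * P (n-kk) := by
    rw [Finset.mul_sum]
    rw [Finset.sum_congr rfl (fun j _ => show
        Polynomial.C (B n) * (Polynomial.C (c n j) * P (n-j))
          = Polynomial.C (B n * c n j) * P (n-j) by rw [Polynomial.C_mul]; ring)]
    apply Finset.sum_subset
    · intro x hx; simp only [hK, Finset.mem_Icc] at *; omega
    · intro x hx hnx
      simp only [hK, Finset.mem_Icc] at hx hnx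
      have : c n x = 0 := by
        rcases (by omega : x = 0 ∨ x = n+1) with h | h
        · exact hc n x (Or.inl (by omega))
        · exact hc n x (Or.inr (by omega))
      rw [this, mul_zero, map_zero, zero_mul]
  have hRC : Polynomial.C (Cc n) * (∑ j ∈ Finset.Icc (1:ℤ) (n-1), Polynomial.C (c (n-1) j) * P (n-1-j))
      = ∑ kk ∈ K, Polynomial.C (Cc n * c (n-1) (kk-1)) * P (n-kk) := by
    rw [Finset.mul_sum]
    symm
    calc ∑ kk ∈ K, Polynomial.C (Cc n * c (n-1) (kk-1)) * P (n-kk)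
        = ∑ kk ∈ Finset.Icc (2:ℤ) n, Polynomial.C (Cc n * c (n-1) (kk-1)) * P (n-kk) := by
          symm
          apply Finset.sum_subset
          · intro x hx; simp only [hK, Finset.mem_Icc] at *; omega
          · intro x hx hnx
            simp only [hK, Finset.mem_Icc] at hx hnx
            have : c (n-1) (x-1) = 0 := by
              rcases (by omega : x ≤ 1 ∨ x = n+1) with h | h
              · exact hc (n-1) (x-1) (Or.inl (by omega))
              · exact hc (n-1) (x-1) (Or.inr (by omega))
            rw [this, mul_zero, map_zero, zero_mul]
      _ = ∑ j ∈ Finset.Icc (1:ℤ) (n-1), Polynomial.C (Cc n * c (n-1) (j+1-1)) * P (n-(j+1)) := by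
          rw [show Finset.Icc (2:ℤ) n = Finset.Icc (1+1) ((n-1)+1) by norm_num]
          exact sum_shift_poly (fun kk => Polynomial.C (Cc n * c (n-1) (kk-1)) * P (n-kk)) 1 (n-1)
      _ = ∑ j ∈ Finset.Icc (1:ℤ) (n-1), Polynomial.C (Cc n) * (Polynomial.C (c (n-1) j) * P (n-1-j)) := by
          refine Finset.sum_congr rfl (fun j _ => ?_)
          rw [show j+1-1 = j by ring, show n-(j+1) = n-1-j by ring, Polynomial.C_mul]
          ring
  have hLA : ∑ j ∈ Finset.Icc (1:ℤ) n, Polynomial.C (c n j * A (n-j)) * P (n-j+1)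
      = ∑ kk ∈ K, Polynomial.C (c n (kk+1) * A (n-kk-1)) * P (n-kk) := by
    rw [show Finset.Icc (1:ℤ) n = Finset.Icc (0+1) ((n-1)+1) by norm_num]
    rw [sum_shift_poly (fun j => Polynomial.C (c n j * A (n-j)) * P (n-j+1)) 0 (n-1)]
    rw [Finset.sum_congr rfl (fun kk _ => show
        Polynomial.C (c n (kk+1) * A (n-(kk+1))) * P (n-(kk+1)+1)
          = Polynomial.C (c n (kk+1) * A (n-kk-1)) * P (n-kk) by
      rw [show n-(kk+1) = n-kk-1 by ring, show n-kk-1+1 = n-kk by ring])]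
    apply Finset.sum_subset
    · intro x hx; simp only [hK, Finset.mem_Icc] at *; omega
    · intro x hx hnx
      simp only [hK, Finset.mem_Icc] at hx hnx
      rw [hc n (x+1) (Or.inr (by omega)), zero_mul, map_zero, zero_mul]
  have hLB : ∑ j ∈ Finset.Icc (1:ℤ) n, Polynomial.C (c n j * B (n-j)) * P (n-j)
      = ∑ kk ∈ K, Polynomial.C (c n kk * B (n-kk)) * P (n-kk) := by
    apply Finset.sum_subset
    · intro x hx; simp only [hK, Finset.mem_Icc] at *; omega
    · intro x hx hnx
      simp only [hK, Finset.mem_Icc] at hx hnx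
      have : c n x = 0 := by
        rcases (by omega : x = 0 ∨ x = n+1) with h | h
        · exact hc n x (Or.inl (by omega))
        · exact hc n x (Or.inr (by omega))
      rw [this, zero_mul, map_zero, zero_mul]
  have hLC : ∑ j ∈ Finset.Icc (1:ℤ) n, Polynomial.C (c n j * Cc (n-j)) * P (n-j-1)
      = ∑ kk ∈ K, Polynomial.C (c n (kk-1) * Cc (n-kk+1)) * P (n-kk) := by
    symm
    calc ∑ kk ∈ K, Polynomial.C (c n (kk-1) * Cc (n-kk+1)) * P (n-kk)
        = ∑ kk ∈ Finset.Icc (2:ℤ) (n+1), Polynomial.C (c n (kk-1) * Cc (n-kk+1)) * P (n-kk) := by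
          symm
          apply Finset.sum_subset
          · intro x hx; simp only [hK, Finset.mem_Icc] at *; omega
          · intro x hx hnx
            simp only [hK, Finset.mem_Icc] at hx hnx
            rw [hc n (x-1) (Or.inl (by omega)), zero_mul, map_zero, zero_mul]
      _ = ∑ j ∈ Finset.Icc (1:ℤ) n, Polynomial.C (c n (j+1-1) * Cc (n-(j+1)+1)) * P (n-(j+1)) := by
          rw [show Finset.Icc (2:ℤ) (n+1) = Finset.Icc (1+1) (n+1) by norm_num]
          exact sum_shift_poly (fun kk => Polynomial.C (c n (kk-1) * Cc (n-kk+1)) * P (n-kk)) 1 n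
      _ = ∑ j ∈ Finset.Icc (1:ℤ) n, Polynomial.C (c n j * Cc (n-j)) * P (n-j-1) := by
          refine Finset.sum_congr rfl (fun j _ => ?_)
          rw [show j+1-1 = j by ring, show n-(j+1)+1 = n-j by ring, show n-(j+1) = n-j-1 by ring]
  have hI : ∑ kk ∈ K, Polynomial.C (if kk = 0 then (1:ℝ) else 0) * P (n-kk) = P n := by
    rw [Finset.sum_eq_single_of_mem 0 (by simp only [hK, Finset.mem_Icc]; omega)
      (fun b _ hb => by rw [if_neg hb, map_zero, zero_mul])]
    simp
  set g : ℤ → ℝ := fun kk =>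
    (A n * c (n+1) (kk+1) + B n * c n kk + Cc n * c (n-1) (kk-1))
      - (c n (kk+1) * A (n-kk-1) + c n kk * B (n-kk) + c n (kk-1) * Cc (n-kk+1))
      - (if kk = 0 then (1:ℝ) else 0) with hg
  have hfinal : ∑ kk ∈ K, Polynomial.C (g kk) * P (n-kk) = 0 := by
    have step1 : ∑ kk ∈ K, Polynomial.C (g kk) * P (n-kk)
        = ∑ kk ∈ K,
            ((Polynomial.C (A n * c (n+1) (kk+1)) * P (n-kk)
              + Polynomial.C (B n * c n kk) * P (n-kk)
              + Polynomial.C (Cc n * c (n-1) (kk-1)) * P (n-kk))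
             - (Polynomial.C (c n (kk+1) * A (n-kk-1)) * P (n-kk)
              + Polynomial.C (c n kk * B (n-kk)) * P (n-kk)
              + Polynomial.C (c n (kk-1) * Cc (n-kk+1)) * P (n-kk))
             - Polynomial.C (if kk = 0 then (1:ℝ) else 0) * P (n-kk)) :=
      Finset.sum_congr rfl (fun kk _ => by
        simp only [hg, map_add, map_sub]
        ring)
    rw [step1, Finset.sum_sub_distrib, Finset.sum_sub_distrib, Finset.sum_add_distrib,
      Finset.sum_add_distrib, Finset.sum_add_distrib, Finset.sum_add_distrib,
      hI, ← hRA, ← hRB, ← hRC, ← hLA, ← hLB, ← hLC]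
    rw [Finset.sum_add_distrib, Finset.sum_add_distrib] at hE
    linear_combination -hE
  have hre : ∑ m ∈ Finset.Icc (-1:ℤ) n, Polynomial.C (g (n-m)) * P m = 0 := by
    rw [← hfinal]
    refine Finset.sum_nbij' (i := fun m => n - m) (j := fun kk => n - kk) ?_ ?_ ?_ ?_ ?_
    · intro a ha; simp only [hK, Finset.mem_Icc] at *; omega
    · intro a ha; simp only [hK, Finset.mem_Icc] at *; omega
    · intro a _; ring
    · intro a _; ring
    · intro a _
      rw [show n - (n - a) = a by ring]
  have hz : ∑ m ∈ Finset.Icc (0:ℤ) n, Polynomial.C (g (n-m)) * P m = 0 := by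
    rw [show Finset.Icc (-1:ℤ) n = insert (-1) (Finset.Icc (0:ℤ) n) by
        ext x; simp only [Finset.mem_Icc, Finset.mem_insert]; omega,
      Finset.sum_insert (by simp), hPneg (-1) (by omega), mul_zero, zero_add] at hre
    exact hre
  have hall := indep_aux P hPdeg n.toNat (fun m => g (n-m))
    (by rw [Int.toNat_of_nonneg h0n]; exact hz)
  have hk' := hall (n - k) (by
    rw [Int.toNat_of_nonneg h0n]
    simp only [Finset.mem_Icc]; omega)
  simp only [show n - (n - k) = k by ring, hg, if_neg (by omega : ¬ k = 0)] at hk'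
  linear_combination hk'
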